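/- Let K be a field, s < r, and F_1,...,F_s ∈ K[X_1,...,X_r]. Suppose the projective variety V(F_1^h,...,F_s^h) ⊂ P^r(K̄) defined by the homogenizations is irreducible of dimension r-s and that the affine variety V(F_1,...,F_s) ⊂ A^r(K̄) has pure dimension r-s. Then V(F_1^h,...,F_s^h) is the projective closure of V(F_1,...,F_s), and V(F_1,...,F_s) is irreducible. -/

import Mathlib

open MvPolynomial

/-- The affine zero set in `ι → K` of a set of multivariate polynomials. -/
def aZeros {K : Type*} [Field K] {ι : Type*} (S : Set (MvPolynomial ι K)) : Set (ι → K) :=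
  {x | ∀ f ∈ S, MvPolynomial.eval x f = 0}

/-- A subset of affine space is algebraic (Zariski closed) if it is a zero set. -/
def IsAlg {K : Type*} [Field K] {ι : Type*} (V : Set (ι → K)) : Prop :=
  ∃ S : Set (MvPolynomial ι K), V = aZeros S

/-- Irreducibility of a subset of affine space with respect to algebraic covers. -/
def IsIrr {K : Type*} [Field K] {ι : Type*} (V : Set (ι → K)) : Prop :=
  V.Nonempty ∧ ∀ V₁ V₂ : Set (ι → K), IsAlg V₁ → IsAlg V₂ → V ⊆ V₁ ∪ V₂ → V ⊆ V₁ ∨ V ⊆ V₂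

/-- Dimension: the supremum of lengths of strictly increasing chains of irreducible
algebraic subsets contained in `V`. -/
noncomputable def aDim {K : Type*} [Field K] {ι : Type*} (V : Set (ι → K)) : ℕ∞ :=
  ⨆ (n : ℕ) (_ : ∃ C : Fin (n + 1) → Set (ι → K),
      StrictMono C ∧ ∀ i, IsAlg (C i) ∧ IsIrr (C i) ∧ C i ⊆ V), (n : ℕ∞)

/-- `C` is an irreducible component of `V`: a maximal irreducible algebraic subset. -/
def IsComponent {K : Type*} [Field K] {ι : Type*} (V C : Set (ι → K)) : Prop :=
  IsAlg C ∧ IsIrr C ∧ C ⊆ V ∧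
    ∀ C' : Set (ι → K), IsAlg C' → IsIrr C' → C' ⊆ V → C ⊆ C' → C' = C

/-- `V` is nonempty of pure dimension `n`. -/
def PureDim {K : Type*} [Field K] {ι : Type*} (V : Set (ι → K)) (n : ℕ) : Prop :=
  V.Nonempty ∧ ∀ C, IsComponent V C → aDim C = (n : ℕ∞)

/-- Homogenization of `F ∈ K[X_1,…,X_r]` with homogenizing variable `X_0`
(index `0` of `Fin (r+1)`; variable `i` of `Fin r` becomes index `i.succ`). -/
noncomputable def homog {K : Type*} [Field K] {r : ℕ} (F : MvPolynomial (Fin r) K) :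
    MvPolynomial (Fin (r + 1)) K :=
  ∑ m ∈ F.support,
    MvPolynomial.monomial
      (Finsupp.mapDomain Fin.succ m + Finsupp.single 0 (F.totalDegree - m.sum fun _ e => e))
      (MvPolynomial.coeff m F)

/-- Zariski closure of a subset of affine space. -/
def zcl {K : Type*} [Field K] {ι : Type*} (S : Set (ι → K)) : Set (ι → K) :=
  aZeros {f : MvPolynomial ι K | ∀ x ∈ S, MvPolynomial.eval x f = 0}

lemma eval_homog_smul_cons {L : Type*} [Field L] {r : ℕ} (f : MvPolynomial (Fin r) L)
    (t : L) (x : Fin r → L) :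
    MvPolynomial.eval (t • (Fin.cons 1 x : Fin (r + 1) → L)) (homog f) =
      t ^ f.totalDegree * MvPolynomial.eval x f := by
  rw [homog, map_sum, eval_eq', Finset.mul_sum]
  refine Finset.sum_congr rfl fun m hm => ?_
  rw [eval_monomial, Finsupp.prod_fintype _ _ fun i => pow_zero _, Fin.prod_univ_succ]
  have hσ : (m.sum fun _ e => e) = ∑ j, m j := Finsupp.sum_fintype _ _ fun _ => rfl
  have hle : (∑ j, m j) ≤ f.totalDegree := hσ ▸ le_totalDegree hm
  have h0 : ((Finsupp.mapDomain Fin.succ m +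
      Finsupp.single 0 (f.totalDegree - m.sum fun _ e => e) : Fin (r + 1) →₀ ℕ)) 0 =
      f.totalDegree - ∑ j, m j := by
    rw [Finsupp.add_apply, Finsupp.mapDomain_notin_range _ _ (by simp [Fin.succ_ne_zero]),
      Finsupp.single_eq_same, hσ, zero_add]
  have hj : ∀ j : Fin r, ((Finsupp.mapDomain Fin.succ m +
      Finsupp.single 0 (f.totalDegree - m.sum fun _ e => e) : Fin (r + 1) →₀ ℕ)) j.succ = m j :=
    fun j => by
    rw [Finsupp.add_apply, Finsupp.mapDomain_apply (Fin.succ_injective r),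
      Finsupp.single_eq_of_ne (Fin.succ_ne_zero j), add_zero]
  rw [h0]
  simp only [hj, Pi.smul_apply, Fin.cons_zero, Fin.cons_succ, smul_eq_mul, mul_one]
  have : ∀ j : Fin r, (t * x j) ^ m j = t ^ m j * x j ^ m j := fun j => mul_pow _ _ _
  rw [Finset.prod_congr rfl fun j _ => this j, Finset.prod_mul_distrib,
    Finset.prod_pow_eq_pow_sum]
  rw [show t ^ (f.totalDegree - ∑ j, m j) * (t ^ (∑ j, m j) * ∏ j, x j ^ m j)
      = t ^ f.totalDegree * ∏ j, x j ^ m j from by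
    rw [← mul_assoc, ← pow_add, Nat.sub_add_cancel hle]]
  ring

lemma eval_homog_cons {L : Type*} [Field L] {r : ℕ} (f : MvPolynomial (Fin r) L)
    (x : Fin r → L) :
    MvPolynomial.eval (Fin.cons 1 x : Fin (r + 1) → L) (homog f) = MvPolynomial.eval x f := by
  have := eval_homog_smul_cons f 1 x
  rwa [one_smul, one_pow, one_mul] at this

lemma map_homog {L M : Type*} [Field L] [Field M] (φ : L →+* M) {r : ℕ}
    (f : MvPolynomial (Fin r) L) :
    MvPolynomial.map φ (homog f) = homog (MvPolynomial.map φ f) := by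
  have hs : (MvPolynomial.map φ f).support = f.support :=
    support_map_of_injective _ φ.injective
  have hd : (MvPolynomial.map φ f).totalDegree = f.totalDegree := by
    rw [totalDegree, totalDegree, hs]
  rw [homog, homog, map_sum, hs, hd]
  exact Finset.sum_congr rfl fun m hm => by rw [map_monomial, coeff_map]

lemma subset_zcl {K : Type*} [Field K] {ι : Type*} (S : Set (ι → K)) : S ⊆ zcl S :=
  fun x hx f hf => hf x hx

lemma zcl_subset {K : Type*} [Field K] {ι : Type*} {A : Set (ι → K)}
    {T : Set (MvPolynomial ι K)} (h : A ⊆ aZeros T) : zcl A ⊆ aZeros T :=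
  fun x hx f hf => hx f fun y hy => h hy f hf

lemma isAlg_union {K : Type*} [Field K] {ι : Type*} {V₁ V₂ : Set (ι → K)}
    (h₁ : IsAlg V₁) (h₂ : IsAlg V₂) : IsAlg (V₁ ∪ V₂) := by
  obtain ⟨S, rfl⟩ := h₁
  obtain ⟨T, rfl⟩ := h₂
  refine ⟨{p | ∃ s ∈ S, ∃ t ∈ T, p = s * t}, ?_⟩
  ext x
  constructor
  · rintro (hx | hx) f ⟨g, hg, h, hh, rfl⟩ <;> rw [map_mul]
    · rw [hx g hg, zero_mul]
    · rw [hx h hh, mul_zero]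
  · intro h
    by_contra hc
    simp only [Set.mem_union, not_or] at hc
    obtain ⟨h₁, h₂⟩ := hc
    simp only [aZeros, Set.mem_setOf_eq, not_forall] at h₁ h₂
    obtain ⟨g, hg, hg0⟩ := h₁
    obtain ⟨g', hg', hg0'⟩ := h₂
    have := h (g * g') ⟨g, hg, g', hg', rfl⟩
    rw [map_mul] at this
    rcases mul_eq_zero.1 this with h | h
    · exact hg0 h
    · exact hg0' h

theorem stmt8 {K : Type*} [Field K] (r s : ℕ) (hrs : s < r)
    (F : Fin s → MvPolynomial (Fin r) K)
    (hirr : IsIrr (aZeros (Set.range fun i =>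
        MvPolynomial.map (algebraMap K (AlgebraicClosure K)) (homog (F i)))))
    (hdimh : aDim (aZeros (Set.range fun i =>
        MvPolynomial.map (algebraMap K (AlgebraicClosure K)) (homog (F i)))) =
      ((r - s + 1 : ℕ) : ℕ∞))
    (hpure : PureDim (aZeros (Set.range fun i =>
        MvPolynomial.map (algebraMap K (AlgebraicClosure K)) (F i))) (r - s)) :
    aZeros (Set.range fun i =>
        MvPolynomial.map (algebraMap K (AlgebraicClosure K)) (homog (F i))) =
      zcl {y : Fin (r + 1) → AlgebraicClosure K |
        ∃ t : AlgebraicClosure K,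
          ∃ x ∈ aZeros (Set.range fun i =>
            MvPolynomial.map (algebraMap K (AlgebraicClosure K)) (F i)),
            y = t • (Fin.cons (1 : AlgebraicClosure K) x : Fin (r + 1) → AlgebraicClosure K)} ∧
    IsIrr (aZeros (Set.range fun i =>
        MvPolynomial.map (algebraMap K (AlgebraicClosure K)) (F i))) := by
  set L := AlgebraicClosure K
  set φ := algebraMap K L with hφ
  set W : Set (Fin r → L) := aZeros (Set.range fun i => MvPolynomial.map φ (F i)) with hW
  set Z : Set (Fin (r + 1) → L) :=
    aZeros (Set.range fun i => MvPolynomial.map φ (homog (F i))) with hZ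
  set cone : Set (Fin (r + 1) → L) :=
    {y | ∃ t : L, ∃ x ∈ W, y = t • (Fin.cons 1 x : Fin (r + 1) → L)} with hcone
  -- points of the cone over W lie in Z
  have coneZ : cone ⊆ Z := by
    rintro y ⟨t, x, hx, rfl⟩ f ⟨i, rfl⟩
    have hFx : MvPolynomial.eval x (MvPolynomial.map φ (F i)) = 0 := hx _ ⟨i, rfl⟩
    show MvPolynomial.eval (t • (Fin.cons 1 x : Fin (r + 1) → L))
      (MvPolynomial.map φ (homog (F i))) = 0
    rw [map_homog, eval_homog_smul_cons, hFx, mul_zero]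
  -- points of Z with nonzero first coordinate are in the cone (with t = z 0)
  have hback : ∀ z ∈ Z, z 0 ≠ 0 → ∃ x ∈ W, z = z 0 • (Fin.cons 1 x : Fin (r + 1) → L) := by
    intro z hz h0
    refine ⟨fun j => z j.succ / z 0, ?_, ?_⟩
    · rintro f ⟨i, rfl⟩
      have hzz : MvPolynomial.eval z (MvPolynomial.map φ (homog (F i))) = 0 := hz _ ⟨i, rfl⟩
      show MvPolynomial.eval (fun j => z j.succ / z 0) (MvPolynomial.map φ (F i)) = 0
      rw [map_homog, show z = z 0 • (Fin.cons 1 (fun j => z j.succ / z 0) :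
          Fin (r + 1) → L) from ?_, eval_homog_smul_cons] at hzz
      · rcases mul_eq_zero.1 hzz with h | h
        · exact absurd (pow_eq_zero_iff'.mp h).1 h0
        · exact h
      · funext i
        refine Fin.cases ?_ (fun j => ?_) i
        · simp
        · simp [mul_div_cancel₀ _ h0]
    · funext i
      refine Fin.cases ?_ (fun j => ?_) i
      · simp
      · simp [mul_div_cancel₀ _ h0]
  -- embedding of W into Z via x ↦ (1, x)
  have emb : ∀ x ∈ W, (Fin.cons 1 x : Fin (r + 1) → L) ∈ Z := by
    intro x hx
    have : (Fin.cons 1 x : Fin (r + 1) → L) =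
        (1 : L) • (Fin.cons 1 x : Fin (r + 1) → L) := (one_smul _ _).symm
    rw [this]
    exact coneZ ⟨1, x, hx, rfl⟩
  obtain ⟨x₀, hx₀⟩ := hpure.1
  -- Part 1
  have part1 : Z = zcl cone := by
    have hcover : Z ⊆ aZeros {(X 0 : MvPolynomial (Fin (r + 1)) L)} ∪ zcl cone := by
      intro z hz
      by_cases h0 : z 0 = 0
      · left
        rintro f rfl
        rw [eval_X]
        exact h0
      · right
        obtain ⟨x, hx, hzz⟩ := hback z hz h0
        exact subset_zcl _ ⟨z 0, x, hx, hzz⟩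
    rcases hirr.2 _ _ ⟨_, rfl⟩ ⟨_, rfl⟩ hcover with h | h
    · exfalso
      have := h (emb x₀ hx₀) (X 0) rfl
      rw [eval_X, Fin.cons_zero] at this
      exact one_ne_zero this
    · exact Set.Subset.antisymm h (zcl_subset coneZ)
  refine ⟨part1, hpure.1, ?_⟩
  -- Part 2 : irreducibility of W
  rintro V₁ V₂ ⟨S₁, rfl⟩ ⟨S₂, rfl⟩ hsub
  have hcover : Z ⊆ (aZeros {(X 0 : MvPolynomial (Fin (r + 1)) L)} ∪
      aZeros ((homog : MvPolynomial (Fin r) L → _) '' S₁)) ∪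
      aZeros ((homog : MvPolynomial (Fin r) L → _) '' S₂) := by
    intro z hz
    by_cases h0 : z 0 = 0
    · left; left
      rintro f rfl
      rw [eval_X]
      exact h0
    · obtain ⟨x, hx, hzz⟩ := hback z hz h0
      rw [hzz]
      rcases hsub hx with hx1 | hx1
      · left; right
        rintro f ⟨g, hg, rfl⟩
        rw [eval_homog_smul_cons, hx1 g hg, mul_zero]
      · right
        rintro f ⟨g, hg, rfl⟩
        rw [eval_homog_smul_cons, hx1 g hg, mul_zero]
  rcases hirr.2 _ _ (isAlg_union ⟨_, rfl⟩ ⟨_, rfl⟩) ⟨_, rfl⟩ hcover with h | h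
  · left
    intro x hx f hf
    rcases h (emb x hx) with h1 | h1
    · exfalso
      have := h1 (X 0) rfl
      rw [eval_X, Fin.cons_zero] at this
      exact one_ne_zero this
    · have := h1 (homog f) ⟨f, hf, rfl⟩
      rwa [eval_homog_cons] at this
  · right
    intro x hx f hf
    have := h (emb x hx) (homog f) ⟨f, hf, rfl⟩
    rwa [eval_homog_cons] at this
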